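/- Let J be a reflexive closed subspace of a Banach space X. If (X**, J) has the CQLP (where J = J^⊥⊥ via reflexivity), then (X,J) has the CQLP. -/

import Mathlib

open NormedSpace

/-- (X,J) has the compact quotient lifting property (CQLP). -/
def HasCQLP (X : Type*) [NormedAddCommGroup X] [NormedSpace ℝ X] (J : Submodule ℝ X) : Prop :=
  ∀ (Z : Type) [NormedAddCommGroup Z] [NormedSpace ℝ Z] [CompleteSpace Z]
    (T : Z →L[ℝ] X ⧸ J), IsCompactOperator T → ∃ S : Z →L[ℝ] X, IsCompactOperator S ∧
      (∀ z : Z, (Submodule.Quotient.mk (S z) : X ⧸ J) = T z) ∧ ‖S‖ = ‖T‖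

set_option maxHeartbeats 1000000 in
/-- Let J be a reflexive closed subspace of X.  If (X**, J) has the CQLP
(J viewed inside X** via the canonical embedding, J = J^⊥⊥ by reflexivity), then (X,J)
has the CQLP. -/
theorem stmt_10 (X : Type*) [NormedAddCommGroup X] [NormedSpace ℝ X] [CompleteSpace X]
    (J : Submodule ℝ X) (hJ : IsClosed (J : Set X))
    (hrefl : Function.Surjective (inclusionInDoubleDual ℝ J))
    (h : HasCQLP (StrongDual ℝ (StrongDual ℝ X)) ((Submodule.map (inclusionInDoubleDual ℝ X).toLinearMap J : Submodule ℝ (StrongDual ℝ (StrongDual ℝ X))))) :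
    HasCQLP X J := by
  classical
  letI : NormedAddCommGroup (StrongDual ℝ (StrongDual ℝ X)) := inferInstance
  intro Z _ _ _ T hT
  set ji : X →ₗᵢ[ℝ] StrongDual ℝ (StrongDual ℝ X) := inclusionInDoubleDualLi ℝ (E := X) with hji
  have hjicoe : ∀ x : X, ji x = inclusionInDoubleDual ℝ X x := fun _ => rfl
  set J' : Submodule ℝ (StrongDual ℝ (StrongDual ℝ X)) :=
    Submodule.map (inclusionInDoubleDual ℝ X).toLinearMap J with hJ'
  -- the range of the double dual embedding
  set K : Submodule ℝ (StrongDual ℝ (StrongDual ℝ X)) := LinearMap.range ji.toLinearMap with hK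
  have hKclosed : IsClosed (K : Set (StrongDual ℝ (StrongDual ℝ X))) := by
    have : IsComplete (K : Set (StrongDual ℝ (StrongDual ℝ X))) := by
      have : (K : Set (StrongDual ℝ (StrongDual ℝ X))) = Set.range ji := by
        ext x; simp [hK, LinearMap.mem_range]
      rw [this]
      exact (ji.isometry.isUniformInducing.isComplete_range)
    exact this.isClosed
  have hJ'K : J' ≤ K := by
    rintro x ⟨y, hy, rfl⟩
    exact ⟨y, rfl⟩
  -- the induced linear map between quotients
  have hmapq : J ≤ Submodule.comap ji.toLinearMap J' := by
    intro x hx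
    exact ⟨x, hx, rfl⟩
  set g : (X ⧸ J) →ₗ[ℝ] (StrongDual ℝ (StrongDual ℝ X)) ⧸ J' := Submodule.mapQ J J' ji.toLinearMap hmapq
    with hg
  have hgmk : ∀ x : X, g (Submodule.Quotient.mk x) = Submodule.Quotient.mk (ji x) := by
    intro x; rfl
  -- g is an isometry
  have hgnorm : ∀ q : X ⧸ J, ‖g q‖ = ‖q‖ := by
    intro q
    obtain ⟨x, rfl⟩ := Submodule.Quotient.mk_surjective J q
    apply le_antisymm
    · refine le_of_forall_pos_le_add fun ε hε => ?_
      obtain ⟨m, hm, hmlt⟩ := Submodule.Quotient.norm_mk_lt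
        (Submodule.Quotient.mk x : X ⧸ J) hε
      calc ‖g (Submodule.Quotient.mk x)‖ = ‖g (Submodule.Quotient.mk m)‖ := by rw [hm]
        _ = ‖(Submodule.Quotient.mk (ji m) : (StrongDual ℝ (StrongDual ℝ X)) ⧸ J')‖ := by rw [hgmk]
        _ ≤ ‖ji m‖ := Submodule.Quotient.norm_mk_le _ _
        _ = ‖m‖ := ji.norm_map m
        _ ≤ ‖(Submodule.Quotient.mk x : X ⧸ J)‖ + ε := hmlt.le
    · refine le_of_forall_pos_le_add fun ε hε => ?_
      obtain ⟨m, hm, hmlt⟩ := Submodule.Quotient.norm_mk_lt (g (Submodule.Quotient.mk x)) hε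
      rw [hgmk] at hm
      have : m - ji x ∈ J' := (Submodule.Quotient.eq J').1 hm
      obtain ⟨w, hw, hweq⟩ := this
      have hmji : m = ji (x + w) := by
        have : m = ji x + (m - ji x) := by abel
        rw [this, ← hweq]
        simp [map_add]
        rfl
      calc ‖(Submodule.Quotient.mk x : X ⧸ J)‖
          = ‖(Submodule.Quotient.mk (x + w) : X ⧸ J)‖ := by
            congr 1
            rw [Submodule.Quotient.eq]
            simpa using J.neg_mem hw
        _ ≤ ‖x + w‖ := Submodule.Quotient.norm_mk_le _ _
        _ = ‖ji (x + w)‖ := (ji.norm_map _).symm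
        _ = ‖m‖ := by rw [hmji]
        _ ≤ ‖g (Submodule.Quotient.mk x)‖ + ε := hmlt.le
  -- closedness of J' (needed for the NormedAddCommGroup instance on the quotient)
  haveI : IsClosed (J' : Set (StrongDual ℝ (StrongDual ℝ X))) := by
    have : (J' : Set (StrongDual ℝ (StrongDual ℝ X))) = ji '' (J : Set X) := by
      ext x; constructor
      · rintro ⟨y, hy, rfl⟩; exact ⟨y, hy, rfl⟩
      · rintro ⟨y, hy, rfl⟩; exact ⟨y, hy, rfl⟩
    rw [this]
    exact (((isComplete_image_iff ji.isometry.isUniformInducing).2 hJ.isComplete)).isClosed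
  set gi : (X ⧸ J) →ₗᵢ[ℝ] (StrongDual ℝ (StrongDual ℝ X)) ⧸ J' :=
    ⟨g, hgnorm⟩ with hgi
  set T' : Z →L[ℝ] (StrongDual ℝ (StrongDual ℝ X)) ⧸ J' := gi.toContinuousLinearMap.comp T with hT'
  have hT'compact : IsCompactOperator T' := by
    have := hT.continuous_comp gi.toContinuousLinearMap.continuous
    exact this
  obtain ⟨S', hS'cmp, hS'lift, hS'norm⟩ := h Z T' hT'compact
  -- every value of S' lies in the range of the embedding
  have hmem : ∀ z : Z, S' z ∈ K := by
    intro z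
    obtain ⟨x, hx⟩ := Submodule.Quotient.mk_surjective J (T z)
    have h1 : (Submodule.Quotient.mk (S' z) : (StrongDual ℝ (StrongDual ℝ X)) ⧸ J') =
        Submodule.Quotient.mk (ji x) := by
      rw [hS'lift z, ← hgmk x, hx]
      rfl
    have h2 : S' z - ji x ∈ J' := (Submodule.Quotient.eq J').1 h1
    have h3 : S' z = (S' z - ji x) + ji x := by abel
    rw [h3]
    exact K.add_mem (hJ'K h2) ⟨x, rfl⟩
  -- the lifted compact operator into X
  set e : X ≃ₗᵢ[ℝ] K := ji.equivRange with he
  set Sc : Z →L[ℝ] K := S'.codRestrict K hmem with hSc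
  have hSccmp : IsCompactOperator Sc := hS'cmp.codRestrict hmem hKclosed
  set S : Z →L[ℝ] X := (e.symm.toLinearIsometry.toContinuousLinearMap).comp Sc with hS
  have hjS : ∀ z : Z, ji (S z) = S' z := by
    intro z
    have : e (S z) = Sc z := by
      simp [hS]
    have := congrArg (Subtype.val) this
    rwa [show ((e (S z) : K) : StrongDual ℝ (StrongDual ℝ X)) = ji (S z) from rfl] at this
  refine ⟨S, ?_, ?_, ?_⟩
  · have := hSccmp.continuous_comp e.symm.toLinearIsometry.toContinuousLinearMap.continuous
    exact this
  · intro z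
    obtain ⟨x, hx⟩ := Submodule.Quotient.mk_surjective J (T z)
    have h1 : (Submodule.Quotient.mk (S' z) : (StrongDual ℝ (StrongDual ℝ X)) ⧸ J') =
        Submodule.Quotient.mk (ji x) := by
      rw [hS'lift z, ← hgmk x, hx]
      rfl
    have h2 : S' z - ji x ∈ J' := (Submodule.Quotient.eq J').1 h1
    obtain ⟨w, hw, hweq⟩ := h2
    have h4 : ji (S z - x) = ji w := by
      rw [map_sub, hjS z]
      exact hweq.symm
    have h5 : S z - x = w := ji.injective h4
    rw [← hx, Submodule.Quotient.eq]
    rw [h5]; exact hw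
  · have h1 : ji.toContinuousLinearMap.comp S = S' := by
      apply ContinuousLinearMap.ext
      intro z
      show ji (S z) = S' z
      exact hjS z
    have h2 : ‖S'‖ = ‖S‖ :=
      ContinuousLinearMap.opNorm_ext S' S fun z => by
        rw [← hjS z]; exact ji.norm_map _
    rw [← h2, hS'norm]; exact ContinuousLinearMap.opNorm_ext _ _ fun z => gi.norm_map (T z)
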